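/- For every real number β with 0 < β < 1, every ε > 0, and every u with u ≥ ε², one has the quantitative error bound u^β − χ(u, ε²) ≤ ε^{2β} (1 + β · log(u/ε²)), where χ(u, ε²) := β ∫₀^u ((r + ε²)^β − ε^{2β})/r dr. -/

import Mathlib

open MeasureTheory Set
open scoped NNReal

/-- The smoothing function `χ(u, ε²) := β ∫₀ᵘ ((r + ε²)^β − ε^{2β})/r dr`
used to approximate `u ↦ u^β`. Powers with real exponents are `Real.rpow`. -/
noncomputable def chi (β ε u : ℝ) : ℝ :=
  β * ∫ r in (0:ℝ)..u, ((r + ε ^ 2) ^ β - ε ^ (2 * β)) / r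

lemma real_add_rpow_le (x y p : ℝ) (hx : 0 ≤ x) (hy : 0 ≤ y) (hp : 0 ≤ p) (hp1 : p ≤ 1) :
    (x + y) ^ p ≤ x ^ p + y ^ p := by
  lift x to ℝ≥0 using hx
  lift y to ℝ≥0 using hy
  have h := NNReal.rpow_add_le_add_rpow x y hp hp1
  exact_mod_cast h

/-- For `0 < β < 1`, `ε > 0`, and `u ≥ ε²`, one has the quantitative error bound
`u^β − χ(u, ε²) ≤ ε^{2β} (1 + β log(u/ε²))`. -/
theorem rpow_sub_chi_error_bound
    (β ε : ℝ) (hβ0 : 0 < β) (hβ1 : β < 1) (hε : 0 < ε)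
    (u : ℝ) (hu : ε ^ 2 ≤ u) :
    u ^ β - chi β ε u ≤ ε ^ (2 * β) * (1 + β * Real.log (u / ε ^ 2)) := by
  set c : ℝ := ε ^ 2 with hc_def
  have hc : 0 < c := by positivity
  have hu0 : 0 < u := lt_of_lt_of_le hc hu
  have hcβ : ε ^ (2 * β) = c ^ β := by
    rw [hc_def, ← Real.rpow_natCast ε 2, ← Real.rpow_mul hε.le]
    norm_num
  set g : ℝ → ℝ := fun r => ((r + c) ^ β - c ^ β) / r with hg_def
  have hchi : chi β ε u = β * ∫ r in (0:ℝ)..u, g r := by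
    rw [chi, hcβ]
  -- pointwise facts about g
  have hg_nonneg : ∀ r : ℝ, 0 ≤ r → 0 ≤ g r := by
    intro r hr
    apply div_nonneg _ hr
    have : c ^ β ≤ (r + c) ^ β :=
      Real.rpow_le_rpow hc.le (by linarith) hβ0.le
    linarith
  have hg_le : ∀ r : ℝ, 0 < r → g r ≤ r ^ (β - 1) := by
    intro r hr
    rw [Real.rpow_sub_one hr.ne', hg_def]
    rw [div_le_div_iff_of_pos_right hr]
    have := real_add_rpow_le r c β hr.le hc.le hβ0.le hβ1.le
    linarith
  -- integrability of the power function
  have hpow_int : ∀ a b : ℝ, IntervalIntegrable (fun r : ℝ => r ^ (β - 1)) volume a b :=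
    fun a b => intervalIntegral.intervalIntegrable_rpow' (by linarith)
  -- measurability of g
  have hg_meas : ∀ a b : ℝ, AEStronglyMeasurable g (volume.restrict (Set.uIoc a b)) := by
    intro a b
    apply Measurable.aestronglyMeasurable
    measurability
  -- integrability of g on [0, u]
  have hg_int : IntervalIntegrable g volume 0 u := by
    apply IntervalIntegrable.mono_fun (hpow_int 0 u) (hg_meas 0 u)
    rw [Filter.EventuallyLE, ae_restrict_iff' measurableSet_uIoc]
    apply Filter.Eventually.of_forall
    intro r hr
    rw [Set.uIoc_of_le hu0.le] at hr
    rw [Real.norm_eq_abs, Real.norm_eq_abs, abs_of_nonneg (hg_nonneg r hr.1.le),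
      abs_of_nonneg (Real.rpow_nonneg hr.1.le _)]
    exact hg_le r hr.1
  have hg_int1 : IntervalIntegrable g volume 0 c :=
    hg_int.mono_set (by rw [Set.uIcc_of_le hc.le, Set.uIcc_of_le hu0.le]; exact Set.Icc_subset_Icc le_rfl hu)
  have hg_int2 : IntervalIntegrable g volume c u :=
    hg_int.mono_set (by rw [Set.uIcc_of_le hu, Set.uIcc_of_le hu0.le]; exact Set.Icc_subset_Icc hc.le le_rfl)
  -- the power integral values
  have hrpow_val : ∀ b : ℝ, 0 ≤ b → ∫ r in (0:ℝ)..b, r ^ (β - 1) = b ^ β / β := by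
    intro b hb
    rw [integral_rpow (Or.inl (by linarith))]
    rw [Real.zero_rpow (by intro h; linarith [sub_add_cancel β 1 ▸ h] : β - 1 + 1 ≠ 0)]
    ring_nf
  -- u^β = β * ∫₀ᵘ r^(β-1)
  have hu_val : u ^ β = β * ∫ r in (0:ℝ)..u, r ^ (β - 1) := by
    rw [hrpow_val u hu0.le]
    field_simp
  -- split both integrals at c
  have hsplit_pow : ∫ r in (0:ℝ)..u, r ^ (β - 1) =
      (∫ r in (0:ℝ)..c, r ^ (β - 1)) + ∫ r in c..u, r ^ (β - 1) :=
    (intervalIntegral.integral_add_adjacent_intervals (hpow_int 0 c) (hpow_int c u)).symm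
  have hsplit_g : ∫ r in (0:ℝ)..u, g r = (∫ r in (0:ℝ)..c, g r) + ∫ r in c..u, g r :=
    (intervalIntegral.integral_add_adjacent_intervals hg_int1 hg_int2).symm
  -- bound on [0, c] : ∫ g ≥ 0
  have hb1 : 0 ≤ ∫ r in (0:ℝ)..c, g r := by
    apply intervalIntegral.integral_nonneg hc.le
    intro r hr
    exact hg_nonneg r hr.1
  -- bound on [c, u] : ∫ (r^(β-1) - g r) ≤ ∫ c^β / r = c^β log (u/c)
  have hdiv_int : IntervalIntegrable (fun r : ℝ => c ^ β / r) volume c u := by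
    apply ContinuousOn.intervalIntegrable
    apply ContinuousOn.div continuousOn_const continuousOn_id
    intro r hr
    rw [Set.uIcc_of_le hu] at hr
    exact (lt_of_lt_of_le hc hr.1).ne'
  have hb2 : ∫ r in c..u, (r ^ (β - 1) - g r) ≤ ∫ r in c..u, c ^ β / r := by
    apply intervalIntegral.integral_mono_on hu ((hpow_int c u).sub hg_int2) hdiv_int
    intro r hr
    have hr0 : 0 < r := lt_of_lt_of_le hc hr.1
    rw [Real.rpow_sub_one hr0.ne', hg_def]
    rw [div_sub_div_same, div_le_div_iff_of_pos_right hr0]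
    have : r ^ β ≤ (r + c) ^ β :=
      Real.rpow_le_rpow hr0.le (by linarith) hβ0.le
    linarith
  have hlog_val : ∫ r in c..u, c ^ β / r = c ^ β * Real.log (u / c) := by
    simp_rw [div_eq_mul_inv]
    rw [intervalIntegral.integral_const_mul, integral_inv_of_pos hc hu0, ← div_eq_mul_inv]
  -- put everything together
  have hsub : ∫ r in c..u, (r ^ (β - 1) - g r) =
      (∫ r in c..u, r ^ (β - 1)) - ∫ r in c..u, g r :=
    intervalIntegral.integral_sub (hpow_int c u) hg_int2
  have hcval : ∫ r in (0:ℝ)..c, r ^ (β - 1) = c ^ β / β := hrpow_val c hc.le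
  rw [hchi, hu_val, hsplit_pow, hsplit_g, hcβ]
  have hkey : (∫ r in c..u, r ^ (β - 1)) - (∫ r in c..u, g r) ≤ c ^ β * Real.log (u / c) := by
    rw [← hsub, ← hlog_val]; exact hb2
  have h1 : (∫ r in (0:ℝ)..c, r ^ (β - 1)) - (∫ r in (0:ℝ)..c, g r) ≤ c ^ β / β := by
    rw [hcval]; linarith
  have hfinal : β * ((∫ r in (0:ℝ)..c, r ^ (β - 1)) + (∫ r in c..u, r ^ (β - 1)))
      - β * ((∫ r in (0:ℝ)..c, g r) + (∫ r in c..u, g r))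
      ≤ β * (c ^ β / β + c ^ β * Real.log (u / c)) := by
    nlinarith [hβ0.le]
  calc β * ((∫ r in (0:ℝ)..c, r ^ (β - 1)) + (∫ r in c..u, r ^ (β - 1)))
      - β * ((∫ r in (0:ℝ)..c, g r) + (∫ r in c..u, g r))
      ≤ β * (c ^ β / β + c ^ β * Real.log (u / c)) := hfinal
    _ = c ^ β * (1 + β * Real.log (u / c)) := by field_simp
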